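/- Let L be a bounded modular lattice equipped with a complementation ' (i.e., x ⊔ x' = ⊤ and x ⊓ x' = ⊥ for all x). Define x ⊙ y := (x ⊔ y') ⊓ y and x → y := (x ⊓ y) ⊔ x'. Then the divisibility identity (x → y) ⊙ x = x ⊓ y holds for all x, y ∈ L. -/
import Mathlib

/-- In a bounded modular lattice with a complementation `c`,
defining `x ⊙ y := (x ⊔ c y) ⊓ y` and `x → y := (x ⊓ y) ⊔ c x`, the
divisibility identity `(x → y) ⊙ x = x ⊓ y` holds. -/
theorem stmt_2 {L : Type*} [Lattice L] [BoundedOrder L] (c : L → L)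
    (hmod : ∀ x y z : L, x ≤ z → (x ⊔ y) ⊓ z = x ⊔ (y ⊓ z))
    (hsup : ∀ x : L, x ⊔ c x = ⊤) (hinf : ∀ x : L, x ⊓ c x = ⊥) :
    ∀ x y : L, (((x ⊓ y) ⊔ c x) ⊔ c x) ⊓ x = x ⊓ y := by
  intro x y
  rw [sup_assoc, sup_idem, hmod (x ⊓ y) (c x) x inf_le_left, inf_comm (c x) x, hinf, sup_bot_eq]
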